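/- A closed, connected, locally tropically convex subset X of R^n/R·(1,...,1) is tropically convex: if every point x ∈ X has ε > 0 with B_ε^trop(x) ∩ X tropically convex, then X itself is tropically convex. -/

import Mathlib

def TropConvex {n : ℕ} (S : Set (Fin n → ℝ)) : Prop :=
  ∀ x ∈ S, ∀ y ∈ S, ∀ lam mu : ℝ, (fun i => max (x i + lam) (y i + mu)) ∈ S

noncomputable def tnorm {n : ℕ} (x : Fin n → ℝ) : ℝ := (⨆ i, x i) - ⨅ i, x i

set_option linter.unusedSectionVars false

namespace Aux18

variable {n : ℕ}

lemma le_sup' (v : Fin n → ℝ) (i : Fin n) : v i ≤ ⨆ j, v j :=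
  le_ciSup (Set.finite_range v).bddAbove i

lemma inf_le' (v : Fin n → ℝ) (i : Fin n) : (⨅ j, v j) ≤ v i :=
  ciInf_le (Set.finite_range v).bddBelow i

section NE
variable [Nonempty (Fin n)]

lemma tn_le {v : Fin n → ℝ} {lo hi : ℝ} (h1 : ∀ i, lo ≤ v i) (h2 : ∀ i, v i ≤ hi) :
    tnorm v ≤ hi - lo := by
  have a1 : (⨆ i, v i) ≤ hi := ciSup_le h2
  have a2 : lo ≤ ⨅ i, v i := le_ciInf h1
  unfold tnorm; linarith

lemma tn_nonneg (v : Fin n → ℝ) : 0 ≤ tnorm v := by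
  obtain ⟨i⟩ := (inferInstance : Nonempty (Fin n))
  have := le_sup' v i
  have := inf_le' v i
  unfold tnorm; linarith

lemma sup_add (v : Fin n → ℝ) (c : ℝ) : (⨆ i, (v i + c)) = (⨆ i, v i) + c := by
  apply le_antisymm
  · exact ciSup_le fun i => add_le_add_left (le_sup' v i) c
  · have : (⨆ i, v i) ≤ (⨆ i, (v i + c)) - c :=
      ciSup_le fun i => by have := le_sup' (fun j => v j + c) i; linarith
    linarith

lemma inf_add (v : Fin n → ℝ) (c : ℝ) : (⨅ i, (v i + c)) = (⨅ i, v i) + c := by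
  apply le_antisymm
  · have : (⨅ i, (v i + c)) - c ≤ ⨅ i, v i :=
      le_ciInf fun i => by have := inf_le' (fun j => v j + c) i; linarith
    linarith
  · exact le_ciInf fun i => add_le_add_left (inf_le' v i) c

lemma tn_shift (v : Fin n → ℝ) (c : ℝ) : tnorm (fun i => v i + c) = tnorm v := by
  unfold tnorm
  rw [sup_add v c, inf_add v c]; ring

lemma tn_const (c : ℝ) : tnorm (fun _ : Fin n => c) = 0 := by
  have : (fun _ : Fin n => c) = fun i : Fin n => (fun _ : Fin n => (0:ℝ)) i + c := by
    funext i; simp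
  rw [this, tn_shift]
  unfold tnorm
  simp [ciSup_const, ciInf_const]

lemma tn_triangle (v w : Fin n → ℝ) : tnorm (fun i => v i + w i) ≤ tnorm v + tnorm w := by
  have h1 : ∀ i, v i + w i ≤ (⨆ j, v j) + ⨆ j, w j := fun i =>
    add_le_add (le_sup' v i) (le_sup' w i)
  have h2 : ∀ i, (⨅ j, v j) + (⨅ j, w j) ≤ v i + w i := fun i =>
    add_le_add (inf_le' v i) (inf_le' w i)
  have := tn_le h2 h1
  unfold tnorm at *; linarith

lemma tn_dist (v w : Fin n → ℝ) : tnorm (v - w) ≤ 2 * dist v w := by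
  have h : ∀ i, |(v - w) i| ≤ dist v w := fun i => by
    have := norm_le_pi_norm (v - w) i
    rw [Real.norm_eq_abs] at this
    rw [dist_eq_norm]; exact this
  have h1 : ∀ i, -(dist v w) ≤ (v - w) i := fun i => (abs_le.mp (h i)).1
  have h2 : ∀ i, (v - w) i ≤ dist v w := fun i => (abs_le.mp (h i)).2
  have := tn_le h1 h2
  linarith

lemma tn_max_le (a b : Fin n → ℝ) (lam mu : ℝ) :
    tnorm (fun i => max (a i + lam) (b i + mu)) ≤ max (tnorm a) (tnorm b) := by
  set f : Fin n → ℝ := fun i => max (a i + lam) (b i + mu) with hf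
  obtain ⟨i₀, hi₀⟩ := Finite.exists_max f
  have hsup : (⨆ i, f i) = f i₀ := le_antisymm (ciSup_le hi₀) (le_sup' f i₀)
  rcases le_total (a i₀ + lam) (b i₀ + mu) with h | h
  · have hm : f i₀ = b i₀ + mu := max_eq_right h
    have hinf : (⨅ i, (b i + mu)) ≤ ⨅ i, f i :=
      le_ciInf fun i => (inf_le' (fun j => b j + mu) i).trans (le_max_right _ _)
    have : tnorm f ≤ (b i₀ + mu) - ⨅ i, (b i + mu) := by
      unfold tnorm; rw [hsup, hm]; linarith
    rw [inf_add b mu] at this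
    have hb : tnorm f ≤ tnorm b := by
      have := le_sup' b i₀; unfold tnorm at *; linarith
    exact hb.trans (le_max_right _ _)
  · have hm : f i₀ = a i₀ + lam := max_eq_left h
    have hinf : (⨅ i, (a i + lam)) ≤ ⨅ i, f i :=
      le_ciInf fun i => (inf_le' (fun j => a j + lam) i).trans (le_max_left _ _)
    have : tnorm f ≤ (a i₀ + lam) - ⨅ i, (a i + lam) := by
      unfold tnorm; rw [hsup, hm]; linarith
    rw [inf_add a lam] at this
    have ha : tnorm f ≤ tnorm a := by
      have := le_sup' a i₀; unfold tnorm at *; linarith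
    exact ha.trans (le_max_left _ _)

lemma tropConvex_ball (p : Fin n → ℝ) (r : ℝ) :
    TropConvex {z : Fin n → ℝ | tnorm (z - p) ≤ r} := by
  intro z hz w hw lam mu
  have he : (fun i => max (z i + lam) (w i + mu)) - p
      = fun i => max ((z - p) i + lam) ((w - p) i + mu) := by
    funext i
    simp only [Pi.sub_apply]
    rw [← max_sub_sub_right]
    congr 1 <;> ring
  show tnorm ((fun i => max (z i + lam) (w i + mu)) - p) ≤ r
  rw [he]
  exact (tn_max_le (z - p) (w - p) lam mu).trans (max_le hz hw)

lemma tropConvex_inter {S T : Set (Fin n → ℝ)} (hS : TropConvex S) (hT : TropConvex T) :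
    TropConvex (S ∩ T) := fun x hx y hy lam mu =>
  ⟨hS x hx.1 y hy.1 lam mu, hT x hx.2 y hy.2 lam mu⟩

lemma tn_sub_triangle (a b c : Fin n → ℝ) : tnorm (a - c) ≤ tnorm (a - b) + tnorm (b - c) := by
  have : a - c = fun i => (a - b) i + (b - c) i := by funext i; simp [Pi.sub_apply]
  rw [this]; exact tn_triangle _ _

lemma uniform {X : Set (Fin n → ℝ)}
    (hloc : ∀ x ∈ X, ∃ ε > (0:ℝ), TropConvex {y ∈ X | tnorm (y - x) ≤ ε})
    {K : Set (Fin n → ℝ)} (hK : IsCompact K) (hKX : K ⊆ X) :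
    ∃ δ > (0:ℝ), ∀ p ∈ K, TropConvex {z ∈ X | tnorm (z - p) ≤ δ} := by
  classical
  rcases K.eq_empty_or_nonempty with rfl | hne
  · exact ⟨1, one_pos, fun p hp => absurd hp (Set.notMem_empty p)⟩
  have hc : ∀ q : K, ∃ ε > (0:ℝ), TropConvex {y ∈ X | tnorm (y - (q:Fin n → ℝ)) ≤ ε} :=
    fun q => hloc q (hKX q.2)
  choose ε hεpos hεconv using hc
  set U : K → Set (Fin n → ℝ) := fun q => {z | tnorm (z - (q:Fin n → ℝ)) < ε q / 2} with hU
  have hUopen : ∀ q, IsOpen (U q) := by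
    intro q
    rw [Metric.isOpen_iff]
    intro z hz
    simp only [hU, Set.mem_setOf_eq] at hz
    refine ⟨(ε q / 2 - tnorm (z - (q:Fin n → ℝ))) / 2, by linarith, ?_⟩
    intro w hw
    simp only [hU, Set.mem_setOf_eq]
    have h1 := tn_sub_triangle w z (q : Fin n → ℝ)
    have h2 := tn_dist w z
    rw [Metric.mem_ball] at hw
    linarith
  have hcov : K ⊆ ⋃ q, U q := by
    intro p hp
    refine Set.mem_iUnion.mpr ⟨⟨p, hp⟩, ?_⟩
    simp only [hU, Set.mem_setOf_eq]
    have : p - p = fun _ : Fin n => (0:ℝ) := by funext i; simp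
    rw [this, tn_const]
    have := hεpos ⟨p, hp⟩
    linarith
  obtain ⟨t, ht⟩ := hK.elim_finite_subcover U hUopen hcov
  have htne : t.Nonempty := by
    obtain ⟨p₀, hp₀⟩ := hne
    have := ht hp₀
    rw [Set.mem_iUnion₂] at this
    obtain ⟨q, hq, _⟩ := this
    exact ⟨q, hq⟩
  refine ⟨t.inf' htne (fun q => ε q / 4), ?_, ?_⟩
  · rw [gt_iff_lt, Finset.lt_inf'_iff]
    intro q _
    have := hεpos q; linarith
  · intro p hp
    have := ht hp
    rw [Set.mem_iUnion₂] at this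
    obtain ⟨q, hqt, hpq⟩ := this
    simp only [hU, Set.mem_setOf_eq] at hpq
    set δ := t.inf' htne (fun q => ε q / 4) with hδ
    have hδle : δ ≤ ε q / 4 := Finset.inf'_le _ hqt
    have hseteq : {z ∈ X | tnorm (z - p) ≤ δ}
        = {z ∈ X | tnorm (z - (q:Fin n → ℝ)) ≤ ε q} ∩ {z | tnorm (z - p) ≤ δ} := by
      ext z
      constructor
      · rintro ⟨hzX, hzle⟩
        have h1 := tn_sub_triangle z p (q : Fin n → ℝ)
        exact ⟨⟨hzX, by linarith [hεpos q]⟩, hzle⟩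
      · rintro ⟨⟨hzX, _⟩, hzle⟩
        exact ⟨hzX, hzle⟩
    rw [hseteq]
    exact tropConvex_inter (hεconv q) (tropConvex_ball p δ)

lemma march {X : Set (Fin n → ℝ)}
    (hsat : ∀ x ∈ X, ∀ c : ℝ, (fun i => x i + c) ∈ X)
    (y x : Fin n → ℝ)
    (hseg : ∀ t : ℝ, (fun i => max (x i) (y i + t)) ∈ X)
    {δ : ℝ} (hδpos : 0 < δ)
    (hballs : ∀ p ∈ (fun σ : ℝ => fun i => max (x i) (y i + σ)) ''
        Set.Icc (⨅ i, (x i - y i)) (⨆ i, (x i - y i)),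
      TropConvex {z ∈ X | tnorm (z - p) ≤ δ})
    (a : Fin n → ℝ) (haX : a ∈ X) (haT : tnorm (a - x) ≤ δ / 4) :
    ∀ t : ℝ, (fun i => max (a i) (y i + t)) ∈ X := by
  classical
  set W : ℝ → (Fin n → ℝ) := fun s => fun i => max (a i) (y i + s) with hW
  suffices hsuf : ∀ t : ℝ, W t ∈ X by intro t; exact hsuf t
  set u : ℝ := ⨅ i, (a i - x i) with hu
  set T : ℝ := tnorm (a - x) with hT
  have hTnn : 0 ≤ T := tn_nonneg _
  have hTδ : T ≤ δ / 4 := haT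
  have hTdef : T = (⨆ j, (a j - x j)) - (⨅ j, (a j - x j)) := by
    rw [hT]; unfold tnorm; simp only [Pi.sub_apply]
  have F1 : ∀ i, x i + u ≤ a i := by
    intro i
    have h := inf_le' (fun j => a j - x j) i
    rw [← hu] at h
    linarith
  have F2 : ∀ i, a i ≤ x i + u + T := by
    intro i
    have h := le_sup' (fun j => a j - x j) i
    have h2 : (⨆ j, (a j - x j)) = u + T := by rw [hTdef, ← hu]; ring
    rw [h2] at h
    linarith
  -- the single step
  have step : ∀ s t : ℝ, W s ∈ X → 0 ≤ t - s → t - s ≤ δ / 2 → W t ∈ X := by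
    intro s t hWs hst1 hst2
    set P : Fin n → ℝ := fun i => max (x i + u) (y i + t) with hP
    have hPX : P ∈ X := by
      have h0 := hseg (t - u)
      have hPe : P = fun i => max (x i) (y i + (t - u)) + u := by
        funext i; simp only [hP]; rw [← max_add_add_right]; congr 1; ring
      rw [hPe]; exact hsat _ h0 u
    set σlo : ℝ := ⨅ i, (x i - y i) with hσlo
    set σhi : ℝ := ⨆ i, (x i - y i) with hσhi
    have hσle : σlo ≤ σhi := by
      obtain ⟨i⟩ := (inferInstance : Nonempty (Fin n))
      have h1 := inf_le' (fun j => x j - y j) i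
      have h2 := le_sup' (fun j => x j - y j) i
      rw [← hσlo] at h1; rw [← hσhi] at h2
      linarith
    have hclamp : ∃ phat ∈ (fun σ : ℝ => fun i => max (x i) (y i + σ)) '' Set.Icc σlo σhi,
        ∃ c : ℝ, ∀ i, P i = phat i + c := by
      rcases lt_or_ge (t - u) σlo with h1 | h1
      · refine ⟨_, ⟨σlo, ⟨le_rfl, hσle⟩, rfl⟩, u, ?_⟩
        intro i
        have hxi := inf_le' (fun j => x j - y j) i
        rw [← hσlo] at hxi
        have hle : y i + t ≤ x i + u := by linarith
        have h2 : y i + σlo ≤ x i := by linarith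
        show max (x i + u) (y i + t) = max (x i) (y i + σlo) + u
        rw [max_eq_left hle, max_eq_left h2]
      · rcases le_or_gt (t - u) σhi with h2 | h2
        · refine ⟨_, ⟨t - u, ⟨h1, h2⟩, rfl⟩, u, ?_⟩
          intro i
          show max (x i + u) (y i + t) = max (x i) (y i + (t - u)) + u
          rw [← max_add_add_right]; congr 1; ring
        · refine ⟨_, ⟨σhi, ⟨hσle, le_rfl⟩, rfl⟩, t - σhi, ?_⟩
          intro i
          have hxi := le_sup' (fun j => x j - y j) i
          rw [← hσhi] at hxi
          have hle : x i + u ≤ y i + t := by linarith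
          have h3 : x i ≤ y i + σhi := by linarith
          show max (x i + u) (y i + t) = max (x i) (y i + σhi) + (t - σhi)
          rw [max_eq_right hle, max_eq_right h3]; ring
    obtain ⟨phat, hphat, c, hc⟩ := hclamp
    have hconv := hballs phat hphat
    have hWsP : ∀ i, -(t - s) ≤ W s i - P i ∧ W s i - P i ≤ T := by
      intro i
      have hWsi : W s i = max (a i) (y i + s) := rfl
      have hPi : P i = max (x i + u) (y i + t) := rfl
      constructor
      · have h3 : P i ≤ W s i + (t - s) := by
          rw [hWsi, hPi]
          apply max_le
          · exact le_trans (F1 i) (le_trans (le_max_left _ _) (by linarith))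
          · have : y i + s ≤ max (a i) (y i + s) := le_max_right _ _
            linarith
        linarith
      · have h3 : W s i ≤ P i + T := by
          rw [hWsi, hPi]
          apply max_le
          · have : x i + u ≤ max (x i + u) (y i + t) := le_max_left _ _
            have := F2 i
            linarith
          · have : y i + t ≤ max (x i + u) (y i + t) := le_max_right _ _
            linarith
        linarith
    have hWsball : W s ∈ {z ∈ X | tnorm (z - phat) ≤ δ} := by
      refine ⟨hWs, ?_⟩
      have he : W s - phat = fun i => (W s i - P i) + c := by
        funext i; simp only [Pi.sub_apply]; rw [hc i]; ring
      rw [he, tn_shift]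
      have := tn_le (fun i => (hWsP i).1) (fun i => (hWsP i).2)
      linarith
    have hPball : P ∈ {z ∈ X | tnorm (z - phat) ≤ δ} := by
      refine ⟨hPX, ?_⟩
      have he : P - phat = fun _ : Fin n => c := by
        funext i; simp only [Pi.sub_apply]; rw [hc i]; ring
      rw [he, tn_const]
      linarith
    have hcombo := hconv (W s) hWsball P hPball 0 0
    have heq : (fun i => max (W s i + 0) (P i + 0)) = W t := by
      funext i
      simp only [add_zero]
      have hWsi : W s i = max (a i) (y i + s) := rfl
      have hPi : P i = max (x i + u) (y i + t) := rfl
      have hWti : W t i = max (a i) (y i + t) := rfl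
      rw [hWsi, hPi, hWti]
      apply le_antisymm
      · apply max_le
        · apply max_le (le_max_left _ _)
          exact le_trans (by linarith : y i + s ≤ y i + t) (le_max_right _ _)
        · apply max_le
          · exact le_trans (F1 i) (le_max_left _ _)
          · exact le_max_right _ _
      · apply max_le
        · exact le_trans (le_max_left _ _) (le_max_left _ _)
        · exact le_trans (le_max_right _ _) (le_max_right _ _)
    rw [heq] at hcombo
    exact hcombo.1
  -- base point
  set t0 : ℝ := ⨅ i, (a i - y i) with ht0
  have hbase : ∀ t, t ≤ t0 → W t = a := by
    intro t ht
    funext i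
    have h := inf_le' (fun j => a j - y j) i
    rw [← ht0] at h
    have : y i + t ≤ a i := by linarith
    exact max_eq_left this
  have main : ∀ k : ℕ, ∀ t : ℝ, t ≤ t0 + k * (δ / 2) → W t ∈ X := by
    intro k
    induction k with
    | zero =>
      intro t ht
      rw [hbase t (by simpa using ht)]
      exact haX
    | succ k ih =>
      intro t ht
      by_cases h : t ≤ t0 + k * (δ / 2)
      · exact ih t h
      · push_neg at h
        refine step (t0 + k * (δ / 2)) t (ih _ le_rfl) (by linarith) ?_
        push_cast at ht
        linarith
  intro t
  obtain ⟨k, hk⟩ := exists_nat_ge ((t - t0) / (δ / 2))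
  apply main k
  rw [div_le_iff₀ (by linarith : (0:ℝ) < δ / 2)] at hk
  linarith

end NE
end Aux18

open Aux18 in
/-- A closed, connected, locally tropically convex subset of `ℝⁿ/ℝ·(1,…,1)` is tropically
convex. The quotient is encoded by a saturated subset `X ⊆ ℝⁿ` (invariant under adding
multiples of the all-ones vector); the tropical ball of radius `ε` around `x` is
`{y | tnorm (y - x) ≤ ε}`. -/
theorem stmt18 {n : ℕ} (hn : 0 < n) (X : Set (Fin n → ℝ))
    (hsat : ∀ x ∈ X, ∀ c : ℝ, (fun i => x i + c) ∈ X)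
    (hclosed : IsClosed X) (hconn : IsConnected X)
    (hloc : ∀ x ∈ X, ∃ ε > (0:ℝ), TropConvex {y ∈ X | tnorm (y - x) ≤ ε}) :
    TropConvex X := by
  classical
  have hne : Nonempty (Fin n) := ⟨⟨0, hn⟩⟩
  intro x hx y hy lam mu
  suffices H : ∀ z ∈ X, ∀ t : ℝ, (fun i => max (z i) (y i + t)) ∈ X by
    have h1 := H x hx (mu - lam)
    have h2 := hsat _ h1 lam
    have he : (fun i => (fun j => max (x j) (y j + (mu - lam))) i + lam)
        = fun i => max (x i + lam) (y i + mu) := by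
      funext i
      show max (x i) (y i + (mu - lam)) + lam = max (x i + lam) (y i + mu)
      rw [← max_add_add_right]; congr 1; ring
    rwa [he] at h2
  -- C : points whose tropical segment to y lies in X
  set C : Set (Fin n → ℝ) := {z | ∀ t : ℝ, (fun i => max (z i) (y i + t)) ∈ X} with hC
  have hCclosed : IsClosed C := by
    have hCe : C = ⋂ t : ℝ, (fun z : Fin n → ℝ => (fun i => max (z i) (y i + t))) ⁻¹' X := by
      ext z
      simp only [hC, Set.mem_setOf_eq, Set.mem_iInter, Set.mem_preimage]
    rw [hCe]
    refine isClosed_iInter fun t => IsClosed.preimage ?_ hclosed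
    exact continuous_pi fun i => (continuous_apply i).max continuous_const
  -- y itself is in C
  have hyC : y ∈ C := by
    intro t
    have h1 := hsat y hy (max 0 t)
    have he : (fun i => y i + max 0 t) = fun i => max (y i) (y i + t) := by
      funext i
      rw [← max_add_add_left]
      simp
    rwa [he] at h1
  -- key: openness in X via march
  have key : ∀ z : Fin n → ℝ, ∃ δz > (0:ℝ),
      z ∈ X → z ∈ C → ∀ a ∈ X, tnorm (a - z) ≤ δz / 4 → a ∈ C := by
    intro z
    by_cases hz : z ∈ X ∧ z ∈ C
    · obtain ⟨hzX, hzC⟩ := hz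
      have hKcpt : IsCompact ((fun σ : ℝ => fun i => max (z i) (y i + σ)) ''
          Set.Icc (⨅ i, (z i - y i)) (⨆ i, (z i - y i))) := by
        apply IsCompact.image isCompact_Icc
        exact continuous_pi fun i => continuous_const.max (continuous_const.add continuous_id)
      have hKX : ((fun σ : ℝ => fun i => max (z i) (y i + σ)) ''
          Set.Icc (⨅ i, (z i - y i)) (⨆ i, (z i - y i))) ⊆ X := by
        rintro p ⟨σ, _, rfl⟩
        exact hzC σ
      obtain ⟨δ, hδpos, hδ⟩ := uniform hloc hKcpt hKX
      refine ⟨δ, hδpos, fun _ _ a haX haT => ?_⟩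
      exact march hsat y z hzC hδpos hδ a haX haT
    · exact ⟨1, one_pos, fun h1 h2 => absurd ⟨h1, h2⟩ hz⟩
  choose δf hδfpos hδf using key
  -- clopen argument
  have hXC : X ⊆ C := by
    set U : Set (Fin n → ℝ) := ⋃ z ∈ X ∩ C, Metric.ball z (δf z / 8) with hU
    have hUopen : IsOpen U := isOpen_biUnion fun _ _ => Metric.isOpen_ball
    have hVopen : IsOpen Cᶜ := hCclosed.isOpen_compl
    have hcover : X ⊆ U ∪ Cᶜ := by
      intro z hz
      by_cases h : z ∈ C
      · left
        exact Set.mem_biUnion ⟨hz, h⟩ (Metric.mem_ball_self (by linarith [hδfpos z]))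
      · right; exact h
    have hdisj : ¬ (X ∩ (U ∩ Cᶜ)).Nonempty := by
      rintro ⟨w, hwX, hwU, hwC⟩
      rw [hU, Set.mem_iUnion₂] at hwU
      obtain ⟨z, hzXC, hwz⟩ := hwU
      rw [Metric.mem_ball] at hwz
      have h1 : tnorm (w - z) ≤ δf z / 4 := by
        have := tn_dist w z
        linarith
      exact hwC (hδf z hzXC.1 hzXC.2 w hwX h1)
    intro z hz
    by_contra hzC
    have hpre := hconn.isPreconnected
    have hne1 : (X ∩ U).Nonempty :=
      ⟨y, hy, Set.mem_biUnion ⟨hy, hyC⟩ (Metric.mem_ball_self (by linarith [hδfpos y]))⟩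
    have hne2 : (X ∩ Cᶜ).Nonempty := ⟨z, hz, hzC⟩
    exact hdisj (hpre U Cᶜ hUopen hVopen hcover hne1 hne2)
  exact fun z hz t => hXC hz t
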